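/- Given ε > 0, δ ∈ (0,1), population size N, and bound B = 1, if the sample size m satisfies (2mε²)·(N/(N-m+1)) ≥ ln(1/δ), then sampling m points uniformly without replacement from a finite {0,1}-valued population of size N with mean μ gives P(Z̄ - μ ≥ ε) ≤ δ. -/

import Mathlib

open scoped Classical

open Real


lemma hcore (p h : ℝ) (hp0 : 0 ≤ p) (hp1 : p ≤ 1) (hh : 0 ≤ h) :
    1 - p + p * Real.exp h ≤ Real.exp (p * h + h ^ 2 / 8) := by
  set q : ℝ := 1 - p with hq
  have hq0 : 0 ≤ q := by simp [hq]; linarith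
  have hqp : q + p = 1 := by rw [hq]; ring
  clear_value q
  have hpos : ∀ x : ℝ, 0 < q + p * Real.exp x := by
    intro x
    rcases eq_or_lt_of_le hp0 with h0 | h0
    · simp [hq, ← h0]
    · have := Real.exp_pos x
      nlinarith
  set F : ℝ → ℝ := fun x => p * x + x ^ 2 / 8 - Real.log (q + p * Real.exp x) with hF
  set F' : ℝ → ℝ := fun x => p + x / 4 - p * Real.exp x / (q + p * Real.exp x) with hF'
  have hden : ∀ x : ℝ, HasDerivAt (fun x => q + p * Real.exp x) (p * Real.exp x) x := by
    intro x
    exact ((Real.hasDerivAt_exp x).const_mul p).const_add q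
  have hdF : ∀ x : ℝ, HasDerivAt F (F' x) x := by
    intro x
    have h2 : HasDerivAt (fun x => Real.log (q + p * Real.exp x))
        (p * Real.exp x / (q + p * Real.exp x)) x := (hden x).log (ne_of_gt (hpos x))
    have h3 : HasDerivAt (fun x : ℝ => p * x + x ^ 2 / 8) (p + x / 4) x := by
      have h4 : HasDerivAt (fun x : ℝ => p * x) p x := by
        simpa using (hasDerivAt_id x).const_mul p
      have h5 := h4.add ((hasDerivAt_pow 2 x).div_const 8)
      refine h5.congr_deriv ?_
      ring
    exact h3.sub h2
  have hdF' : ∀ x : ℝ, HasDerivAt F'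
      (1 / 4 - p * q * Real.exp x / (q + p * Real.exp x) ^ 2) x := by
    intro x
    have h1 : HasDerivAt (fun x => p * Real.exp x) (p * Real.exp x) x :=
      (Real.hasDerivAt_exp x).const_mul p
    have h2 : HasDerivAt (fun x => p * Real.exp x / (q + p * Real.exp x))
        ((p * Real.exp x * (q + p * Real.exp x) - p * Real.exp x * (p * Real.exp x)) /
          (q + p * Real.exp x) ^ 2) x := h1.div (hden x) (ne_of_gt (hpos x))
    have h3 : HasDerivAt (fun x : ℝ => p + x / 4) (1 / 4) x := by
      simpa using ((hasDerivAt_id x).div_const 4).const_add p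
    have h4 := h3.sub h2
    refine h4.congr_deriv ?_
    have := ne_of_gt (hpos x)
    field_simp
    ring
  have hF'nonneg : ∀ x : ℝ, 0 ≤ x → 0 ≤ F' x := by
    intro x hx
    have hmono : MonotoneOn F' (Set.Ici (0:ℝ)) := by
      apply monotoneOn_of_deriv_nonneg (convex_Ici 0)
      · exact (fun x _ => (hdF' x).differentiableAt.continuousAt.continuousWithinAt)
      · intro x _
        exact (hdF' x).differentiableAt.differentiableWithinAt
      · intro x _
        rw [(hdF' x).deriv]
        have hsq : (0:ℝ) < (q + p * Real.exp x) ^ 2 := pow_pos (hpos x) 2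
        have h6 : 4 * (p * q * Real.exp x) ≤ (q + p * Real.exp x) ^ 2 := by
          nlinarith [sq_nonneg (q - p * Real.exp x)]
        have h5 : p * q * Real.exp x / (q + p * Real.exp x) ^ 2 ≤ 1 / 4 := by
          rw [div_le_iff₀ hsq]
          linarith
        linarith
    have h0 : F' 0 = 0 := by
      simp [hF', hq]
    have := hmono (Set.mem_Ici.2 le_rfl) (Set.mem_Ici.2 hx) hx
    rw [h0] at this
    exact this
  have hFnonneg : 0 ≤ F h := by
    have hmono : MonotoneOn F (Set.Ici (0:ℝ)) := by
      apply monotoneOn_of_deriv_nonneg (convex_Ici 0)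
      · exact (fun x _ => (hdF x).differentiableAt.continuousAt.continuousWithinAt)
      · intro x _
        exact (hdF x).differentiableAt.differentiableWithinAt
      · intro x hx
        rw [interior_Ici] at hx
        rw [(hdF x).deriv]
        exact hF'nonneg x (le_of_lt hx)
    have h0 : F 0 = 0 := by
      simp [hF, hq]
    have := hmono (Set.mem_Ici.2 le_rfl) (Set.mem_Ici.2 hh) hh
    rw [h0] at this
    exact this
  have hlog : Real.log (q + p * Real.exp h) ≤ p * h + h ^ 2 / 8 := by
    have h7 := hFnonneg
    simp only [hF] at h7
    linarith
  calc q + p * Real.exp h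
      = Real.exp (Real.log (q + p * Real.exp h)) := (Real.exp_log (hpos h)).symm
    _ ≤ Real.exp (p * h + h ^ 2 / 8) := Real.exp_le_exp.2 hlog



lemma hoeff_sum {ι : Type*} (s : Finset ι) (v : ι → ℝ) (a b t : ℝ)
    (hab : a < b) (ha : a ≤ 0) (hb : 0 ≤ b) (ht : 0 ≤ t)
    (hv : ∀ i ∈ s, a ≤ v i ∧ v i ≤ b) (hsum : ∑ i ∈ s, v i = 0) :
    ∑ i ∈ s, Real.exp (t * v i) ≤ s.card * Real.exp (t ^ 2 * (b - a) ^ 2 / 8) := by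
  have hba : (0:ℝ) < b - a := by linarith
  -- convexity step
  have step1 : ∀ i ∈ s, Real.exp (t * v i) ≤
      ((b - v i) * Real.exp (t * a) + (v i - a) * Real.exp (t * b)) / (b - a) := by
    intro i hi
    obtain ⟨h1, h2⟩ := hv i hi
    have hθ : (0:ℝ) ≤ (b - v i) / (b - a) := by apply div_nonneg <;> linarith
    have hθ' : (0:ℝ) ≤ (v i - a) / (b - a) := by apply div_nonneg <;> linarith
    have hθs : (b - v i) / (b - a) + (v i - a) / (b - a) = 1 := by
      field_simp
      ring
    have hconv := convexOn_exp.2 (Set.mem_univ (t * a)) (Set.mem_univ (t * b)) hθ hθ' hθs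
    have harg : (b - v i) / (b - a) * (t * a) + (v i - a) / (b - a) * (t * b) = t * v i := by
      field_simp
      ring
    rw [smul_eq_mul, smul_eq_mul, smul_eq_mul, smul_eq_mul, harg] at hconv
    calc Real.exp (t * v i) ≤ (b - v i) / (b - a) * Real.exp (t * a) +
          (v i - a) / (b - a) * Real.exp (t * b) := hconv
      _ = ((b - v i) * Real.exp (t * a) + (v i - a) * Real.exp (t * b)) / (b - a) := by
          field_simp
  have step2 : ∑ i ∈ s, Real.exp (t * v i) ≤
      s.card * ((b * Real.exp (t * a) - a * Real.exp (t * b)) / (b - a)) := by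
    calc ∑ i ∈ s, Real.exp (t * v i)
        ≤ ∑ i ∈ s, ((b - v i) * Real.exp (t * a) + (v i - a) * Real.exp (t * b)) / (b - a) :=
          Finset.sum_le_sum step1
      _ = s.card * ((b * Real.exp (t * a) - a * Real.exp (t * b)) / (b - a)) := by
          rw [← Finset.sum_div]
          rw [Finset.sum_add_distrib, ← Finset.sum_mul, ← Finset.sum_mul]
          rw [Finset.sum_sub_distrib, Finset.sum_sub_distrib, hsum, Finset.sum_const,
            Finset.sum_const]
          simp only [nsmul_eq_mul]
          field_simp
          ring
  refine step2.trans ?_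
  have hkey : (b * Real.exp (t * a) - a * Real.exp (t * b)) / (b - a) ≤
      Real.exp (t ^ 2 * (b - a) ^ 2 / 8) := by
    set p : ℝ := -a / (b - a) with hp
    set h : ℝ := t * (b - a) with hh
    have hp0 : 0 ≤ p := by rw [hp]; apply div_nonneg <;> linarith
    have hp1 : p ≤ 1 := by
      rw [hp, div_le_one hba]; linarith
    have hh0 : 0 ≤ h := by rw [hh]; exact mul_nonneg ht (le_of_lt hba)
    have hc := hcore p h hp0 hp1 hh0
    have heq : (b * Real.exp (t * a) - a * Real.exp (t * b)) / (b - a) =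
        Real.exp (t * a) * (1 - p + p * Real.exp h) := by
      rw [hp, hh, show t * b = t * a + t * (b - a) by ring, Real.exp_add]
      field_simp
      ring
    have heq2 : Real.exp (t * a) * Real.exp (p * h + h ^ 2 / 8) =
        Real.exp (t ^ 2 * (b - a) ^ 2 / 8) := by
      rw [← Real.exp_add]
      congr 1
      rw [hp, hh]
      field_simp
      ring
    rw [heq, ← heq2]
    exact mul_le_mul_of_nonneg_left hc (le_of_lt (Real.exp_pos _))
  have hcard : (0:ℝ) ≤ (s.card : ℝ) := by positivity
  exact mul_le_mul_of_nonneg_left hkey hcard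



noncomputable section

variable {N : ℕ}

def Inj (N k : ℕ) : Finset (Fin k → Fin N) :=
  Finset.univ.filter fun f => Function.Injective f

lemma mem_Inj {k : ℕ} {f : Fin k → Fin N} : f ∈ Inj N k ↔ Function.Injective f := by
  simp [Inj]

lemma snoc_inj {k : ℕ} {g : Fin k → Fin N} {x : Fin N} (hg : Function.Injective g)
    (hx : ∀ i, g i ≠ x) : Function.Injective (Fin.snoc g x : Fin (k+1) → Fin N) := by
  intro i j hij
  induction i using Fin.lastCases with
  | last =>
    induction j using Fin.lastCases with
    | last => rfl
    | cast j =>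
      rw [Fin.snoc_last, Fin.snoc_castSucc] at hij
      exact absurd hij.symm (hx j)
  | cast i =>
    induction j using Fin.lastCases with
    | last =>
      rw [Fin.snoc_last, Fin.snoc_castSucc] at hij
      exact absurd hij (hx i)
    | cast j =>
      rw [Fin.snoc_castSucc, Fin.snoc_castSucc] at hij
      exact congrArg Fin.castSucc (hg hij)

lemma snoc_eta {k : ℕ} (f : Fin (k+1) → Fin N) :
    (Fin.snoc (fun i : Fin k => f i.castSucc) (f (Fin.last k)) : Fin (k+1) → Fin N) = f := by
  funext i
  induction i using Fin.lastCases with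
  | last => rw [Fin.snoc_last]
  | cast i => rw [Fin.snoc_castSucc]

lemma sum_Inj_succ (k : ℕ) (G : (Fin (k+1) → Fin N) → ℝ) :
    ∑ f ∈ Inj N (k+1), G f =
      ∑ g ∈ Inj N k, ∑ x ∈ Finset.univ \ Finset.image g Finset.univ, G (Fin.snoc g x) := by
  rw [Finset.sum_sigma']
  refine Finset.sum_bij'
    (i := fun f _ => (⟨fun i : Fin k => f i.castSucc, f (Fin.last k)⟩ :
        Σ _g : Fin k → Fin N, Fin N))
    (j := fun p _ => Fin.snoc p.1 p.2) ?_ ?_ ?_ ?_ ?_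
  · intro f hf
    rw [mem_Inj] at hf
    rw [Finset.mem_sigma]
    constructor
    · rw [mem_Inj]
      intro i j hij
      exact Fin.castSucc_injective k (hf hij)
    · simp only [Finset.mem_sdiff, Finset.mem_univ, Finset.mem_image, true_and]
      rintro ⟨i, hi⟩
      exact absurd (hf hi) (Fin.ne_last_of_lt (Fin.castSucc_lt_last i))
  · intro p hp
    rw [Finset.mem_sigma] at hp
    obtain ⟨hp1, hp2⟩ := hp
    rw [mem_Inj] at hp1 ⊢
    simp only [Finset.mem_sdiff, Finset.mem_univ, Finset.mem_image, true_and] at hp2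
    push_neg at hp2
    exact snoc_inj hp1 hp2
  · intro f hf
    exact snoc_eta f
  · intro p hp
    refine Sigma.ext ?_ ?_
    · funext i
      simp
    · simp
  · intro f hf
    rw [snoc_eta f]

lemma card_compl_image {k : ℕ} {g : Fin k → Fin N} (hg : Function.Injective g) :
    (Finset.univ \ Finset.image g Finset.univ).card = N - k := by
  rw [Finset.card_sdiff_of_subset (Finset.subset_univ _), Finset.card_image_of_injective _ hg]
  simp

end

section MGF

variable {N : ℕ}

lemma card_Inj_succ (k : ℕ) (hk : k ≤ N) :
    (((Inj N (k+1)).card : ℝ)) = ((N:ℝ) - k) * ((Inj N k).card : ℝ) := by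
  have h := sum_Inj_succ (N := N) k (fun _ => (1:ℝ))
  simp only [Finset.sum_const, nsmul_eq_mul, mul_one] at h
  rw [h]
  have : ∀ g ∈ Inj N k, ((Finset.univ \ Finset.image g Finset.univ).card : ℝ)
      = (N:ℝ) - k := by
    intro g hg
    rw [card_compl_image (mem_Inj.1 hg), Nat.cast_sub hk]
  rw [Finset.sum_congr rfl this, Finset.sum_const, nsmul_eq_mul]
  ring

lemma sum_compl_image (c : Fin N → ℝ) {k : ℕ} {g : Fin k → Fin N}
    (hg : Function.Injective g) :
    ∑ x ∈ Finset.univ \ Finset.image g Finset.univ, c x = (∑ j, c j) - ∑ i, c (g i) := by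
  rw [Finset.sum_sdiff_eq_sub (Finset.subset_univ _), Finset.sum_image]
  intro i _ j _ hij
  exact hg hij

lemma mgf_le (c : Fin N → ℝ) (hc : ∀ i, 0 ≤ c i ∧ c i ≤ 1) (t : ℝ) (ht : 0 ≤ t)
    (k : ℕ) :
    k + 1 ≤ N →
    ∑ f ∈ Inj N k, Real.exp (t * ((∑ j, c j) / N - ((∑ j, c j) - ∑ i, c (f i)) / ((N:ℝ) - k)))
      ≤ ((Inj N k).card : ℝ) *
        Real.exp (t ^ 2 / 8 * ∑ j ∈ Finset.range k, (((N:ℝ) - j - 1)⁻¹) ^ 2) := by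
  induction k with
  | zero =>
    intro _
    simp
  | succ k IH =>
    intro hk
    have hk' : k + 1 ≤ N := by omega
    have hIH := IH hk'
    have hkN : (k:ℝ) + 2 ≤ (N:ℝ) := by exact_mod_cast hk
    have hNk : (0:ℝ) < (N:ℝ) - k := by linarith
    have hD : (0:ℝ) < (N:ℝ) - k - 1 := by linarith
    set T : ℝ := ∑ j, c j with hT
    set D : ℝ := (N:ℝ) - k - 1 with hDdef
    rw [sum_Inj_succ k (fun f => Real.exp (t * (T / N - (T - ∑ i, c (f i)) / ((N:ℝ) - ((k+1:ℕ):ℝ)))))]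
    have hmain : ∀ g ∈ Inj N k,
        ∑ x ∈ Finset.univ \ Finset.image g Finset.univ,
          Real.exp (t * (T / N - (T - ∑ i, c ((Fin.snoc g x : Fin (k+1) → Fin N) i)) / ((N:ℝ) - (k+1:ℕ))))
        ≤ Real.exp (t * (T / N - (T - ∑ i, c (g i)) / ((N:ℝ) - k))) *
            (((N:ℝ) - k) * Real.exp (t ^ 2 * (D⁻¹) ^ 2 / 8)) := by
      intro g hg
      have hginj : Function.Injective g := mem_Inj.1 hg
      set s : Finset (Fin N) := Finset.univ \ Finset.image g Finset.univ with hs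
      set Sg : ℝ := ∑ i, c (g i) with hSg
      set R : ℝ := (T - Sg) / ((N:ℝ) - k) with hR
      have hcards : ((s.card : ℕ) : ℝ) = (N:ℝ) - k := by
        rw [hs, card_compl_image hginj, Nat.cast_sub (by omega)]
      have hsumc : ∑ x ∈ s, c x = T - Sg := sum_compl_image c hginj
      have hsum0 : 0 ≤ ∑ x ∈ s, c x := Finset.sum_nonneg fun x _ => (hc x).1
      have hsum1 : ∑ x ∈ s, c x ≤ (N:ℝ) - k := by
        calc ∑ x ∈ s, c x ≤ s.card • (1:ℝ) :=
              Finset.sum_le_card_nsmul s c 1 fun x _ => (hc x).2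
          _ = (N:ℝ) - k := by rw [nsmul_eq_mul, mul_one, hcards]
      have hR0 : 0 ≤ R := by
        rw [hR]; apply div_nonneg; linarith [hsumc] ; linarith
      have hR1 : R ≤ 1 := by
        rw [hR, div_le_one hNk]; linarith [hsumc, hsum1]
      -- snoc sum
      have hsnoc : ∀ x : Fin N, ∑ i, c ((Fin.snoc g x : Fin (k+1) → Fin N) i) = Sg + c x := by
        intro x
        rw [Fin.sum_univ_castSucc]
        simp [Fin.snoc_castSucc, Fin.snoc_last, hSg]
      -- exponent split
      have hexp : ∀ x : Fin N,
          Real.exp (t * (T / N - (T - ∑ i, c ((Fin.snoc g x : Fin (k+1) → Fin N) i)) / ((N:ℝ) - (k+1:ℕ))))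
          = Real.exp (t * (T / N - (T - Sg) / ((N:ℝ) - k))) *
              Real.exp (t * ((c x - R) / D)) := by
        intro x
        rw [← Real.exp_add]
        congr 1
        rw [hsnoc x, hR, hDdef]
        have h1 : ((N:ℝ) - (k+1:ℕ)) = (N:ℝ) - k - 1 := by push_cast; ring
        rw [h1]
        have hN0 : (N:ℝ) ≠ 0 := by linarith
        have hNk0 : (N:ℝ) - k ≠ 0 := by linarith
        have hD0 : (N:ℝ) - k - 1 ≠ 0 := by linarith
        field_simp
        ring
      rw [Finset.sum_congr rfl fun x _ => hexp x, ← Finset.mul_sum]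
      apply mul_le_mul_of_nonneg_left _ (le_of_lt (Real.exp_pos _))
      -- hoeffding application
      have happ := hoeff_sum s (fun x => (c x - R) / D) (-R / D) ((1 - R) / D) t
        (by rw [div_lt_div_iff₀ hD hD]; nlinarith)
        (by apply div_nonpos_of_nonpos_of_nonneg <;> linarith)
        (by apply div_nonneg <;> linarith)
        ht
        (fun x _ => ⟨by rw [div_le_div_iff₀ hD hD]; nlinarith [(hc x).1],
                     by rw [div_le_div_iff₀ hD hD]; nlinarith [(hc x).2]⟩)
        (by
          rw [← Finset.sum_div]
          rw [Finset.sum_sub_distrib, Finset.sum_const, nsmul_eq_mul, hsumc, hcards]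
          rw [hR]
          field_simp; ring)
      have hba : (1 - R) / D - (-R / D) = D⁻¹ := by field_simp; ring
      rw [hba, hcards] at happ
      exact happ
    have hstep := Finset.sum_le_sum (s := Inj N k)
      (f := fun g => ∑ x ∈ Finset.univ \ Finset.image g Finset.univ,
          Real.exp (t * (T / N - (T - ∑ i, c ((Fin.snoc g x : Fin (k+1) → Fin N) i)) /
            ((N:ℝ) - ((k+1:ℕ):ℝ)))))
      (g := fun g => Real.exp (t * (T / N - (T - ∑ i, c (g i)) / ((N:ℝ) - k))) *
          (((N:ℝ) - k) * Real.exp (t ^ 2 * (D⁻¹) ^ 2 / 8)))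
      hmain
    refine hstep.trans ?_
    rw [← Finset.sum_mul]
    refine (mul_le_mul_of_nonneg_right hIH (by positivity)).trans ?_
    rw [card_Inj_succ k (by omega), Finset.sum_range_succ, ← hDdef, mul_add, Real.exp_add,
      show t ^ 2 / 8 * D⁻¹ ^ 2 = t ^ 2 * D⁻¹ ^ 2 / 8 from by ring]
    apply le_of_eq
    ring

end MGF

lemma sum_bound (N : ℕ) (m : ℕ) : m + 1 ≤ N →
    ∑ j ∈ Finset.range m, (((N:ℝ) - j - 1)⁻¹) ^ 2 ≤
      (m : ℝ) * ((N:ℝ) - m + 1) / ((N:ℝ) * ((N:ℝ) - m) ^ 2) := by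
  induction m with
  | zero => intro _; simp
  | succ m IH =>
    intro hm
    have h1 := IH (by omega)
    rw [Finset.sum_range_succ]
    have hNm : (m:ℝ) + 2 ≤ (N:ℝ) := by exact_mod_cast hm
    have hm0 : (0:ℝ) ≤ (m:ℝ) := Nat.cast_nonneg m
    have hN0 : (0:ℝ) < N := by linarith
    have ha : (0:ℝ) < (N:ℝ) - m := by linarith
    have ha1 : (0:ℝ) < (N:ℝ) - m - 1 := by linarith
    have key : (m:ℝ) * ((N:ℝ) - m + 1) / ((N:ℝ) * ((N:ℝ) - m) ^ 2) + (((N:ℝ) - m - 1)⁻¹) ^ 2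
        = ((m:ℝ) + 1) * ((N:ℝ) - m) / ((N:ℝ) * ((N:ℝ) - m - 1) ^ 2)
          - (m:ℝ) / ((N:ℝ) * ((N:ℝ) - m) ^ 2 * ((N:ℝ) - m - 1)) := by
      field_simp
      ring
    have hfin : ((m:ℝ) + 1) * ((N:ℝ) - m) / ((N:ℝ) * ((N:ℝ) - m - 1) ^ 2)
        = ((m+1:ℕ):ℝ) * ((N:ℝ) - ((m+1:ℕ):ℝ) + 1) / ((N:ℝ) * ((N:ℝ) - ((m+1:ℕ):ℝ)) ^ 2) := by
      push_cast
      have : (N:ℝ) - (m + 1) + 1 = (N:ℝ) - m := by ring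
      rw [this]
      have h2 : (N:ℝ) - ((m:ℝ) + 1) = (N:ℝ) - m - 1 := by ring
      rw [h2]
    have hnn : 0 ≤ (m:ℝ) / ((N:ℝ) * ((N:ℝ) - m) ^ 2 * ((N:ℝ) - m - 1)) := by positivity
    have hterm : (((N:ℝ) - (m:ℝ) - 1)⁻¹) ^ 2 = (((N:ℝ) - ((m:ℕ):ℝ) - 1)⁻¹) ^ 2 := rfl
    calc ∑ j ∈ Finset.range m, (((N:ℝ) - j - 1)⁻¹) ^ 2 + (((N:ℝ) - (m:ℝ) - 1)⁻¹) ^ 2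
        ≤ (m:ℝ) * ((N:ℝ) - m + 1) / ((N:ℝ) * ((N:ℝ) - m) ^ 2) + (((N:ℝ) - m - 1)⁻¹) ^ 2 :=
          add_le_add h1 le_rfl
      _ = ((m:ℝ) + 1) * ((N:ℝ) - m) / ((N:ℝ) * ((N:ℝ) - m - 1) ^ 2)
          - (m:ℝ) / ((N:ℝ) * ((N:ℝ) - m) ^ 2 * ((N:ℝ) - m - 1)) := key
      _ ≤ ((m:ℝ) + 1) * ((N:ℝ) - m) / ((N:ℝ) * ((N:ℝ) - m - 1) ^ 2) := by linarith
      _ = ((m+1:ℕ):ℝ) * ((N:ℝ) - ((m+1:ℕ):ℝ) + 1) / ((N:ℝ) * ((N:ℝ) - ((m+1:ℕ):ℝ)) ^ 2) := hfin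

lemma sum_emb {N m : ℕ} (G : (Fin m → Fin N) → ℝ) :
    ∑ f : Fin m ↪ Fin N, G ⇑f = ∑ f ∈ Inj N m, G f := by
  apply Finset.sum_bij (i := fun (f : Fin m ↪ Fin N) _ => (⇑f : Fin m → Fin N))
  · intro f _
    exact mem_Inj.2 f.injective
  · intro f1 _ f2 _ h
    exact Function.Embedding.coe_injective h
  · intro f hf
    exact ⟨⟨f, mem_Inj.1 hf⟩, Finset.mem_univ _, rfl⟩
  · intro f _
    rfl

/-- Inverting Serfling's bound (with `B = 1`) for a `{0,1}`-valued population: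
if `(2 m ε²) · (N/(N-m+1)) ≥ ln(1/δ)` then the probability (over a uniformly
random injection modelling sampling without replacement) that the sample mean
exceeds the population mean by `ε` is at most `δ`. -/
theorem stmt_15 (N m : ℕ) (hm : 0 < m) (hmN : m ≤ N)
    (c : Fin N → ℝ) (hc : ∀ i, c i = 0 ∨ c i = 1)
    (ε δ : ℝ) (hε : 0 < ε) (hδ0 : 0 < δ) (hδ1 : δ < 1)
    (hsize : Real.log (1 / δ) ≤ (2 * m * ε ^ 2) * ((N : ℝ) / ((N : ℝ) - m + 1))) :
    ((Finset.univ.filter fun f : Fin m ↪ Fin N =>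
        ε ≤ (m : ℝ)⁻¹ * (∑ i, c (f i)) - (N : ℝ)⁻¹ * (∑ j, c j)).card : ℝ) /
        (Fintype.card (Fin m ↪ Fin N) : ℝ) ≤ δ := by
  have hc01 : ∀ i, 0 ≤ c i ∧ c i ≤ 1 := by
    intro i
    rcases hc i with h | h <;> rw [h] <;> norm_num
  rcases eq_or_lt_of_le hmN with hEQ | hLT
  · subst hEQ
    have hempty : (Finset.univ.filter fun f : Fin m ↪ Fin m =>
        ε ≤ (m : ℝ)⁻¹ * (∑ i, c (f i)) - (m : ℝ)⁻¹ * (∑ j, c j)) = ∅ := by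
      rw [Finset.filter_eq_empty_iff]
      intro f _
      have hbij : Function.Bijective f := Finite.injective_iff_bijective.1 f.injective
      have hsum : ∑ i, c (f i) = ∑ j, c j :=
        Fintype.sum_bijective f hbij _ _ (fun x => rfl)
      rw [hsum]
      push_neg
      linarith
    rw [hempty]
    simp only [Finset.card_empty, Nat.cast_zero, zero_div]
    exact le_of_lt hδ0
  · have hm1 : m + 1 ≤ N := hLT
    set T : ℝ := ∑ j, c j with hT
    have hmR : (0:ℝ) < m := by exact_mod_cast hm
    have hm1R : (m:ℝ) + 1 ≤ (N:ℝ) := by exact_mod_cast hm1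
    have hNpos : (0:ℝ) < N := by linarith
    have hNm : (0:ℝ) < (N:ℝ) - m := by linarith
    set a : ℝ := (m:ℝ) * ε / ((N:ℝ) - m) with ha
    have ha0 : 0 < a := div_pos (mul_pos hmR hε) hNm
    set S : ℝ := ∑ j ∈ Finset.range m, (((N:ℝ) - j - 1)⁻¹) ^ 2 with hS
    have hSpos : 0 < S := by
      rw [hS]
      apply Finset.sum_pos
      · intro j hj
        have hjm : (j:ℝ) + 1 ≤ (m:ℝ) := by exact_mod_cast Finset.mem_range.1 hj
        have : (0:ℝ) < (N:ℝ) - j - 1 := by linarith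
        positivity
      · exact ⟨0, Finset.mem_range.2 hm⟩
    set t : ℝ := 4 * a / S with htdef
    have ht0 : 0 ≤ t := by positivity
    have hmgf := mgf_le c hc01 t ht0 m hm1
    have hbr := sum_emb (N := N) (m := m)
      (fun f => Real.exp (t * (T / N - (T - ∑ i, c (f i)) / ((N:ℝ) - m))))
    have hcard : (Fintype.card (Fin m ↪ Fin N) : ℝ) = ((Inj N m).card : ℝ) := by
      have h := sum_emb (N := N) (m := m) (fun _ => (1:ℝ))
      simpa [Finset.sum_const, nsmul_eq_mul, mul_one, Finset.card_univ] using h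
    set P : Finset (Fin m ↪ Fin N) := Finset.univ.filter fun f : Fin m ↪ Fin N =>
        ε ≤ (m : ℝ)⁻¹ * (∑ i, c (f i)) - (N : ℝ)⁻¹ * T with hP
    have hmark : (P.card : ℝ) * Real.exp (t * a) ≤
        ∑ f ∈ Inj N m, Real.exp (t * (T / N - (T - ∑ i, c (f i)) / ((N:ℝ) - m))) := by
      rw [← hbr]
      calc (P.card : ℝ) * Real.exp (t * a) = ∑ _f ∈ P, Real.exp (t * a) := by
            rw [Finset.sum_const, nsmul_eq_mul]
        _ ≤ ∑ f ∈ P, Real.exp (t * (T / N - (T - ∑ i, c (f i)) / ((N:ℝ) - m))) := by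
            apply Finset.sum_le_sum
            intro f hf
            apply Real.exp_le_exp.2
            apply mul_le_mul_of_nonneg_left _ ht0
            have hev : ε ≤ (m:ℝ)⁻¹ * (∑ i, c (f i)) - (N:ℝ)⁻¹ * T :=
              (Finset.mem_filter.1 hf).2
            have hiden : T / N - (T - ∑ i, c (f i)) / ((N:ℝ) - m)
                = ((m:ℝ)⁻¹ * (∑ i, c (f i)) - (N:ℝ)⁻¹ * T) * ((m:ℝ) / ((N:ℝ) - m)) := by
              field_simp
              ring
            rw [hiden, ha]
            calc (m:ℝ) * ε / ((N:ℝ) - m) = ε * ((m:ℝ) / ((N:ℝ) - m)) := by ring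
              _ ≤ ((m:ℝ)⁻¹ * (∑ i, c (f i)) - (N:ℝ)⁻¹ * T) * ((m:ℝ) / ((N:ℝ) - m)) := by
                  apply mul_le_mul_of_nonneg_right hev
                  positivity
        _ ≤ ∑ f : Fin m ↪ Fin N, Real.exp (t * (T / N - (T - ∑ i, c (f i)) / ((N:ℝ) - m))) :=
            Finset.sum_le_sum_of_subset_of_nonneg (Finset.filter_subset _ _)
              (fun _ _ _ => le_of_lt (Real.exp_pos _))
    have h2 : (P.card : ℝ) ≤ ((Inj N m).card : ℝ) * Real.exp (t^2/8 * S - t * a) := by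
      rw [Real.exp_sub, ← mul_div_assoc, le_div_iff₀ (Real.exp_pos _)]
      exact hmark.trans hmgf
    have hexp_eq : t^2/8 * S - t * a = -(2 * a^2 / S) := by
      rw [htdef]
      field_simp
      ring
    have h3 : Real.exp (-(2 * a^2 / S)) ≤ δ := by
      rw [← Real.exp_log hδ0]
      apply Real.exp_le_exp.2
      have hlog : Real.log (1/δ) = - Real.log δ := by rw [one_div, Real.log_inv]
      rw [hlog] at hsize
      have hB := sum_bound N m hm1
      rw [← hS] at hB
      have hNm1 : (0:ℝ) < (N:ℝ) - m + 1 := by linarith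
      have hBpos : (0:ℝ) < (m:ℝ) * ((N:ℝ) - m + 1) / ((N:ℝ) * ((N:ℝ) - m)^2) := by positivity
      have h4 : 2 * (m:ℝ) * ε^2 * ((N:ℝ) / ((N:ℝ) - m + 1))
          = 2 * a^2 / ((m:ℝ) * ((N:ℝ) - m + 1) / ((N:ℝ) * ((N:ℝ) - m)^2)) := by
        rw [ha]
        field_simp
      have h5 : 2 * a^2 / ((m:ℝ) * ((N:ℝ) - m + 1) / ((N:ℝ) * ((N:ℝ) - m)^2)) ≤ 2 * a^2 / S :=
        div_le_div_of_nonneg_left (by positivity) hSpos hB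
      linarith
    have hcardpos : (0:ℝ) < (Fintype.card (Fin m ↪ Fin N) : ℝ) := by
      have : Nonempty (Fin m ↪ Fin N) := ⟨Fin.castLEEmb hmN⟩
      exact_mod_cast Fintype.card_pos
    rw [div_le_iff₀ hcardpos]
    calc (P.card : ℝ) ≤ ((Inj N m).card : ℝ) * Real.exp (t^2/8 * S - t * a) := h2
      _ = ((Inj N m).card : ℝ) * Real.exp (-(2 * a^2 / S)) := by rw [hexp_eq]
      _ ≤ ((Inj N m).card : ℝ) * δ := by
          apply mul_le_mul_of_nonneg_left h3
          positivity
      _ = δ * (Fintype.card (Fin m ↪ Fin N) : ℝ) := by rw [hcard]; ring
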